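/- A groupoid of order n is a k-translatable pentagonal quasigroup with k > 1 if and only if it has the form x·y = (ax + (1−a)y) mod n where n divides k⁴ − 2k³ + 4k² − 3k + 1 and a ≡ −k³ + k² − 3k + 1 (mod n). -/
import Mathlib


/-- A pentagonal quasigroup: a quasigroup (unique left/right division)
satisfying idempotency, mediality and the pentagonal identity. -/
def IsPentagonal {Q : Type*} (m : Q → Q → Q) : Prop :=
  (∀ a b : Q, ∃! x, m a x = b) ∧
  (∀ a b : Q, ∃! x, m x a = b) ∧
  (∀ x, m x x = x) ∧
  (∀ x y z u, m (m x y) (m z u) = m (m x z) (m y u)) ∧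
  (∀ x y, m (m (m (m x y) x) y) x = y)

/-- A groupoid on `ZMod n` is `k`-translatable if each row of the Cayley table is
the cyclic shift by `k` of the previous row, i.e. `i·j = (i+1)·(j+k)`. -/
def kTranslatable (n k : ℕ) (m : ZMod n → ZMod n → ZMod n) : Prop :=
  ∀ i j : ZMod n, m i j = m (i + 1) (j + (k : ZMod n))

theorem translatable_pentagonal_characterization (n k : ℕ) (hn : 0 < n)
    (hk1 : 1 < k) (hk2 : k < n) (m : ZMod n → ZMod n → ZMod n) :
    (IsPentagonal m ∧ kTranslatable n k m) ↔
      ∃ a : ZMod n,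
        (∀ x y : ZMod n, m x y = a * x + (1 - a) * y) ∧
        (n : ℤ) ∣ ((k : ℤ) ^ 4 - 2 * (k : ℤ) ^ 3 + 4 * (k : ℤ) ^ 2 - 3 * (k : ℤ) + 1) ∧
        a = ((-(k : ℤ) ^ 3 + (k : ℤ) ^ 2 - 3 * (k : ℤ) + 1 : ℤ) : ZMod n) := by
  haveI : NeZero n := ⟨hn.ne'⟩
  constructor
  · rintro ⟨⟨hld, hrd, hidem, hmed, hpent⟩, htr⟩
    -- iterate translatability
    have step : ∀ t : ℕ, ∀ i j : ZMod n, m i j = m (i + t) (j + t * k) := by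
      intro t
      induction t with
      | zero => intro i j; simp
      | succ s ih =>
        intro i j
        rw [htr i j, ih (i + 1) (j + k)]
        congr 1 <;> push_cast <;> ring
    have key : ∀ i j : ZMod n, m i j = m 0 (j - k * i) := by
      intro i j
      have h1 := step (-i : ZMod n).val i j
      rw [ZMod.natCast_val, ZMod.cast_id] at h1
      rw [h1]
      congr 1 <;> ring
    -- from idempotency: m 0 ((1-k)x) = x
    have hx : ∀ x : ZMod n, m 0 ((1 - (k : ZMod n)) * x) = x := by
      intro x
      have h1 : (1 - (k : ZMod n)) * x = x - k * x := by ring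
      rw [h1, ← key x x, hidem]
    -- (1-k) is invertible
    have hinj : Function.Injective (fun x : ZMod n => (1 - (k : ZMod n)) * x) := by
      intro x y h
      have := congrArg (m 0) h
      rwa [hx, hx] at this
    obtain ⟨c, hc⟩ := (Finite.injective_iff_surjective.mp hinj) 1
    simp only at hc
    -- m 0 y = c * y
    have hf : ∀ y : ZMod n, m 0 y = c * y := by
      intro y
      have h1 : y = (1 - (k : ZMod n)) * (c * y) := by linear_combination (-y) * hc
      calc m 0 y = m 0 ((1 - (k : ZMod n)) * (c * y)) := by rw [← h1]
        _ = c * y := hx _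
    set a : ZMod n := -((k : ZMod n) * c) with ha_def
    have hlin : ∀ x y : ZMod n, m x y = a * x + (1 - a) * y := by
      intro x y
      rw [key x y, hf]
      rw [ha_def]
      linear_combination y * hc
    have hrel : a * (1 - (k : ZMod n)) = -(k : ZMod n) := by
      rw [ha_def]; linear_combination (-(k : ZMod n)) * hc
    have h5 := hpent 0 1
    simp only [hlin] at h5
    have hp : a ^ 4 - a ^ 3 + a ^ 2 - a + 1 = 0 := by linear_combination -h5
    have hD : (k : ZMod n) ^ 4 - 2 * (k : ZMod n) ^ 3 + 4 * (k : ZMod n) ^ 2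
        - 3 * (k : ZMod n) + 1 = 0 := by
      linear_combination (1 - (k : ZMod n)) ^ 4 * hp +
        ((1 - 2 * (k : ZMod n) + 2 * (k : ZMod n) ^ 2)
          + a * (-1 + 2 * (k : ZMod n) - 2 * (k : ZMod n) ^ 2 + (k : ZMod n) ^ 3)
          + a ^ 2 * (1 - 2 * (k : ZMod n) + (k : ZMod n) ^ 2)
          + a ^ 3 * (-1 + 3 * (k : ZMod n) - 3 * (k : ZMod n) ^ 2 + (k : ZMod n) ^ 3)) * hrel
    have haT : a = -(k : ZMod n) ^ 3 + (k : ZMod n) ^ 2 - 3 * (k : ZMod n) + 1 := by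
      have h6 : (a - (-(k : ZMod n) ^ 3 + (k : ZMod n) ^ 2 - 3 * (k : ZMod n) + 1))
          * (1 - (k : ZMod n)) = 0 := by
        linear_combination hrel - hD
      have h7 := congrArg (· * c) h6
      simp only [zero_mul] at h7
      linear_combination h7 - (a - (-(k : ZMod n) ^ 3 + (k : ZMod n) ^ 2 - 3 * (k : ZMod n) + 1)) * hc
    refine ⟨a, hlin, ?_, ?_⟩
    · rw [← ZMod.intCast_zmod_eq_zero_iff_dvd]
      push_cast
      linear_combination hD
    · rw [haT]; push_cast; ring
  · rintro ⟨a, hlin, hdvd, ha⟩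
    have hD : (k : ZMod n) ^ 4 - 2 * (k : ZMod n) ^ 3 + 4 * (k : ZMod n) ^ 2
        - 3 * (k : ZMod n) + 1 = 0 := by
      have := (ZMod.intCast_zmod_eq_zero_iff_dvd _ n).mpr hdvd
      push_cast at this
      linear_combination this
    have ha' : a = -(k : ZMod n) ^ 3 + (k : ZMod n) ^ 2 - 3 * (k : ZMod n) + 1 := by
      rw [ha]; push_cast; ring
    have hp : a ^ 4 - a ^ 3 + a ^ 2 - a + 1 = 0 := by
      rw [ha']
      linear_combination ((k : ZMod n) ^ 8 - 2 * (k : ZMod n) ^ 7 + 10 * (k : ZMod n) ^ 6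
        - 12 * (k : ZMod n) ^ 5 + 29 * (k : ZMod n) ^ 4 - 18 * (k : ZMod n) ^ 3
        + 25 * (k : ZMod n) ^ 2 - 3 * (k : ZMod n) + 1) * hD
    have hinv1 : (1 - a) * (a ^ 3 + a) = 1 := by linear_combination -hp
    have hinv2 : a * (-a ^ 3 + a ^ 2 - a + 1) = 1 := by linear_combination -hp
    have hak : a + (1 - a) * (k : ZMod n) = 0 := by
      rw [ha']; linear_combination hD
    refine ⟨⟨?_, ?_, ?_, ?_, ?_⟩, ?_⟩
    · intro p b
      refine ⟨(a ^ 3 + a) * (b - a * p), ?_, ?_⟩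
      · show m p ((a ^ 3 + a) * (b - a * p)) = b
        rw [hlin]; linear_combination (b - a * p) * hinv1
      · intro y hy
        rw [hlin] at hy
        linear_combination (a ^ 3 + a) * hy - y * hinv1
    · intro p b
      refine ⟨(-a ^ 3 + a ^ 2 - a + 1) * (b - (1 - a) * p), ?_, ?_⟩
      · show m ((-a ^ 3 + a ^ 2 - a + 1) * (b - (1 - a) * p)) p = b
        rw [hlin]; linear_combination (b - (1 - a) * p) * hinv2
      · intro y hy
        rw [hlin] at hy
        linear_combination (-a ^ 3 + a ^ 2 - a + 1) * hy - y * hinv2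
    · intro x; rw [hlin]; ring
    · intro x y z u; simp only [hlin]; ring
    · intro x y; simp only [hlin]; linear_combination (x - y) * hp
    · intro i j; simp only [hlin]; linear_combination (-1 : ZMod n) * hak
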